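/- Let G be a graph on vertices u₁,…,u_n such that {u₁,…,u_ℓ} induces a clique in G with ℓ < n. If H₁,…,H_ℓ are pairwise disjoint complete graphs and H_{ℓ+1},…,H_n are arbitrary pairwise disjoint graphs, then box(G[H₁,…,H_n]) ≤ box(H_{ℓ+1}) + … + box(H_n). -/
import Mathlib


open SimpleGraph Finset

/-- A representation of `G` as intersection graph of boxes in `ℝ^ℓ`
(products of `ℓ` closed bounded intervals). -/
def BoxRep {V : Type*} (G : SimpleGraph V) (ℓ : ℕ) : Prop :=
  ∃ f : V → Fin ℓ → ℝ × ℝ,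
    (∀ v i, (f v i).1 ≤ (f v i).2) ∧
    ∀ u v : V, u ≠ v →
      (G.Adj u v ↔ ∀ i, max (f u i).1 (f v i).1 ≤ min (f u i).2 (f v i).2)

/-- The boxicity of a graph: the least positive `ℓ` admitting a box representation. -/
noncomputable def boxicity {V : Type*} (G : SimpleGraph V) : ℕ :=
  sInf {ℓ : ℕ | 0 < ℓ ∧ BoxRep G ℓ}

/-- A graph is an interval graph iff it has a box representation in dimension 1. -/
def IsIntervalGraph {V : Type*} (G : SimpleGraph V) : Prop := BoxRep G 1

/-- A graph is not complete. -/
def NotComplete {V : Type*} (G : SimpleGraph V) : Prop := ∃ a b : V, a ≠ b ∧ ¬ G.Adj a b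

/-- The circular clique `G_k^d`: vertices `a_0, …, a_{k-1}`, with `a_i ~ a_j`
iff `d ≤ |i - j| ≤ k - d`. -/
def circularClique (k d : ℕ) : SimpleGraph (Fin k) :=
  SimpleGraph.fromRel (fun i j =>
    d ≤ ((i : ℤ) - (j : ℤ)).natAbs ∧ ((i : ℤ) - (j : ℤ)).natAbs ≤ k - d)

/-- The `G`-generalized join `G[H₁, …, Hₙ]`. -/
def genJoin {n : ℕ} {V : Fin n → Type*} (G : SimpleGraph (Fin n))
    (H : ∀ i, SimpleGraph (V i)) : SimpleGraph (Σ i, V i) :=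
  SimpleGraph.fromRel (fun x y =>
    G.Adj x.1 y.1 ∨ ∃ h : x.1 = y.1, (H y.1).Adj (h ▸ x.2) y.2)

/-- The join `G ∨ H` of two disjoint graphs. -/
def graphJoin {α β : Type*} (G : SimpleGraph α) (H : SimpleGraph β) :
    SimpleGraph (α ⊕ β) :=
  SimpleGraph.fromRel (fun x y =>
    match x, y with
    | .inl a, .inl b => G.Adj a b
    | .inr a, .inr b => H.Adj a b
    | _, _ => True)

/-- The equivalence `x ∼ y ↔ N(x) = N(y)` (equal open neighborhoods). -/
def nbhdSetoid {V : Type*} (G : SimpleGraph V) : Setoid V :=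
  ⟨fun x y => G.neighborSet x = G.neighborSet y,
    ⟨fun _ => rfl, Eq.symm, Eq.trans⟩⟩

/-- The reduced graph of `G`: vertices are the classes of `nbhdSetoid G`,
with `[x] ~ [y]` iff `x ~ y` in `G`. -/
def reducedGraph {V : Type*} (G : SimpleGraph V) :
    SimpleGraph (Quotient (nbhdSetoid G)) :=
  SimpleGraph.fromRel (fun a b =>
    ∃ x y : V, Quotient.mk (nbhdSetoid G) x = a ∧ Quotient.mk (nbhdSetoid G) y = b ∧ G.Adj x y)

/-- The zero-divisor graph of a commutative ring: vertices are the nonzero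
zero-divisors, with `x ~ y` iff `x * y = 0`. -/
def zeroDivisorGraph (R : Type*) [CommRing R] :
    SimpleGraph {x : R // x ≠ 0 ∧ ∃ y : R, y ≠ 0 ∧ x * y = 0} :=
  SimpleGraph.fromRel (fun x y => (x : R) * (y : R) = 0)

/-- Equivalence on a ring: equal annihilators. -/
def annSetoid (R : Type*) [CommRing R] : Setoid R :=
  ⟨fun x y => ∀ r : R, x * r = 0 ↔ y * r = 0,
    ⟨fun _ _ => Iff.rfl, fun h r => (h r).symm, fun h h' r => (h r).trans (h' r)⟩⟩

/-- Vertices of the compressed zero-divisor graph: annihilator classes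
other than the class of `0` and the class of `1`. -/
def CompressedVertex (R : Type*) [CommRing R] : Type _ :=
  {c : Quotient (annSetoid R) //
    c ≠ Quotient.mk (annSetoid R) 0 ∧ c ≠ Quotient.mk (annSetoid R) 1}

/-- The compressed zero-divisor graph `Γ_E(R)`. -/
def compressedZDG (R : Type*) [CommRing R] : SimpleGraph (CompressedVertex R) :=
  SimpleGraph.fromRel (fun c c' =>
    ∃ x y : R, Quotient.mk (annSetoid R) x = c.1 ∧ Quotient.mk (annSetoid R) y = c'.1 ∧ x * y = 0)

/-- The graph of proper divisors of `N` (`1 < d < N`), `d ~ d'` iff `N ∣ d * d'`;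
this is the compressed zero-divisor graph of `ℤ_N`. -/
def divisorGraph (N : ℕ) : SimpleGraph {d : ℕ // d ∣ N ∧ 1 < d ∧ d < N} :=
  SimpleGraph.fromRel (fun d e => N ∣ d.1 * e.1)


section BoxicityAuxiliary

private lemma arctan_lt_two' (x : ℝ) : Real.arctan x < 2 := by
  have h := Real.arctan_lt_pi_div_two x
  have hpi := Real.pi_lt_d2
  linarith

private lemma neg_two_lt_arctan' (x : ℝ) : -2 < Real.arctan x := by
  have h := Real.neg_pi_div_two_lt_arctan x
  have hpi := Real.pi_lt_d2
  linarith

/-- Box representation indexed by an arbitrary type. -/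
def BoxRepOn {V : Type*} (G : SimpleGraph V) (I : Type*) : Prop :=
  ∃ f : V → I → ℝ × ℝ,
    (∀ v i, (f v i).1 ≤ (f v i).2) ∧
    ∀ u v : V, u ≠ v →
      (G.Adj u v ↔ ∀ i, max (f u i).1 (f v i).1 ≤ min (f u i).2 (f v i).2)

lemma BoxRepOn.toBoxRep {V : Type*} {G : SimpleGraph V} {I : Type*} {m : ℕ}
    (e : I ≃ Fin m) (h : BoxRepOn G I) : BoxRep G m := by
  obtain ⟨f, h1, h2⟩ := h
  refine ⟨fun v i => f v (e.symm i), fun v i => h1 v _, fun u v huv => ?_⟩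
  rw [h2 u v huv]
  constructor
  · intro h i; exact h _
  · intro h i; simpa using h (e i)

private def auxBox {V : Type*} [DecidableEq V] (G : SimpleGraph V) [DecidableRel G.Adj]
    (v : V) : (V × V) ⊕ Unit → ℝ × ℝ := fun c =>
  match c with
  | .inr _ => ((0:ℝ), (1:ℝ))
  | .inl (a, b) =>
      if a ≠ b ∧ ¬ G.Adj a b then
        ((if v = b then (1:ℝ) else 0), (if v = a then (0:ℝ) else 1))
      else ((0:ℝ), (1:ℝ))

lemma boxRep_exists {V : Type*} [Fintype V] (G : SimpleGraph V) :
    ∃ m, 0 < m ∧ BoxRep G m := by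
  classical
  refine ⟨Fintype.card (V × V) + 1, Nat.succ_pos _, ?_⟩
  have e : ((V × V) ⊕ Unit) ≃ Fin (Fintype.card (V × V) + 1) :=
    Fintype.equivFinOfCardEq (by simp)
  refine BoxRepOn.toBoxRep e ?_
  refine ⟨auxBox G, ?_, ?_⟩
  · rintro v (⟨a, b⟩ | c)
    · simp only [auxBox]
      split_ifs with h h1 h2 <;> try norm_num
      exact h.1 (h2.symm.trans h1)
    · norm_num [auxBox]
  · intro u v huv
    constructor
    · rintro hadj (⟨a, b⟩ | c)
      · simp only [auxBox]
        by_cases h : a ≠ b ∧ ¬ G.Adj a b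
        · rw [if_pos h, if_pos h]
          simp only [max_le_iff, le_min_iff]
          refine ⟨⟨?_, ?_⟩, ?_, ?_⟩ <;> split_ifs <;> subst_vars <;>
            first
              | exact absurd hadj h.2
              | exact absurd hadj.symm h.2
              | exact absurd rfl h.1
              | norm_num
              | simp_all
        · rw [if_neg h, if_neg h]; norm_num
      · norm_num [auxBox]
    · intro h
      by_contra hadj
      have hkey := h (Sum.inl (u, v))
      have e1 : auxBox G u (Sum.inl (u, v)) = ((0:ℝ), (0:ℝ)) := by
        simp [auxBox, huv, hadj]
      have e2 : auxBox G v (Sum.inl (u, v)) = ((1:ℝ), (1:ℝ)) := by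
        simp [auxBox, huv, hadj, Ne.symm huv]
      rw [e1, e2] at hkey
      norm_num at hkey

lemma boxicity_spec {V : Type*} [Fintype V] (G : SimpleGraph V) :
    0 < boxicity G ∧ BoxRep G (boxicity G) := by
  have h := boxRep_exists G
  exact Nat.sInf_mem h

lemma genJoin_adj_ne {n : ℕ} {V : Fin n → Type*} (G : SimpleGraph (Fin n))
    (H : ∀ i, SimpleGraph (V i)) {j k : Fin n} (v : V j) (w : V k) (hjk : j ≠ k) :
    (genJoin G H).Adj ⟨j, v⟩ ⟨k, w⟩ ↔ G.Adj j k := by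
  simp only [genJoin, SimpleGraph.fromRel_adj]
  constructor
  · rintro ⟨-, (h | ⟨h, -⟩) | (h | ⟨h, -⟩)⟩
    · exact h
    · exact absurd h hjk
    · exact h.symm
    · exact absurd h (Ne.symm hjk)
  · intro h
    exact ⟨fun he => hjk (congrArg Sigma.fst he), Or.inl (Or.inl h)⟩

lemma genJoin_adj_eq {n : ℕ} {V : Fin n → Type*} (G : SimpleGraph (Fin n))
    (H : ∀ i, SimpleGraph (V i)) {j : Fin n} (v w : V j) :
    (genJoin G H).Adj ⟨j, v⟩ ⟨j, w⟩ ↔ (H j).Adj v w := by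
  simp only [genJoin, SimpleGraph.fromRel_adj]
  constructor
  · rintro ⟨hne, (h | ⟨-, ha⟩) | (h | ⟨-, ha⟩)⟩
    · exact absurd h (G.irrefl)
    · exact ha
    · exact absurd h (G.irrefl)
    · exact ha.symm
  · intro h
    refine ⟨?_, Or.inl (Or.inr ⟨trivial, h⟩)⟩
    intro he
    exact h.ne (eq_of_heq (Sigma.mk.inj_iff.mp he).2)

end BoxicityAuxiliary

/-- If `{u₁, …, u_ℓ}` induces a clique in `G` with `ℓ < n` and `H₁, …, H_ℓ` are complete,
then `box(G[H₁, …, Hₙ]) ≤ box(H_{ℓ+1}) + ⋯ + box(Hₙ)`. -/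
theorem boxicity_genJoin_le_sum_of_clique_complete {n : ℕ} {V : Fin n → Type*}
    [∀ i, Fintype (V i)] (G : SimpleGraph (Fin n)) (H : ∀ i, SimpleGraph (V i))
    (ℓ : ℕ) (hℓ : ℓ < n)
    (hclique : G.IsClique {i : Fin n | (i : ℕ) < ℓ})
    (hcomplete : ∀ i : Fin n, (i : ℕ) < ℓ → H i = ⊤) :
    boxicity (genJoin G H) ≤
      ∑ i ∈ Finset.univ.filter (fun i : Fin n => ℓ ≤ (i : ℕ)), boxicity (H i) := by
  classical
  set S : Finset (Fin n) := Finset.univ.filter (fun i : Fin n => ℓ ≤ (i : ℕ)) with hS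
  set d : Fin n → ℕ := fun i => boxicity (H i) with hd
  have hspec : ∀ i : Fin n, 0 < d i ∧ BoxRep (H i) (d i) := fun i => boxicity_spec (H i)
  choose f hf1 hf2 using fun i => (hspec i).2
  set F : (Σ j, V j) → ((i : {i : Fin n // i ∈ S}) × Fin (d i.1)) → ℝ × ℝ := fun x c =>
    if h : (c.1 : Fin n) = x.1 then
      (Real.arctan (f x.1 x.2 (Fin.cast (congrArg d h) c.2)).1,
       Real.arctan (f x.1 x.2 (Fin.cast (congrArg d h) c.2)).2)
    else if G.Adj x.1 c.1 then ((-2 : ℝ), (5:ℝ)) else ((5:ℝ), (5:ℝ)) with hF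
  have hF1 : ∀ (i : Fin n) (hi : i ∈ S) (u : V i) (cc : Fin (d i)),
      F ⟨i, u⟩ ⟨⟨i, hi⟩, cc⟩ = (Real.arctan (f i u cc).1, Real.arctan (f i u cc).2) := by
    intro i hi u cc
    simp only [hF]
    rw [dif_pos trivial]
    exact congrArg (fun z => (Real.arctan (f i u z).1, Real.arctan (f i u z).2))
      (Fin.ext (by simp))
  have hF2 : ∀ (j : Fin n) (u : V j) (i : Fin n) (hi : i ∈ S) (cc : Fin (d i)),
      i ≠ j → G.Adj j i → F ⟨j, u⟩ ⟨⟨i, hi⟩, cc⟩ = ((-2 : ℝ), (5:ℝ)) := by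
    intro j u i hi cc hij hadj
    simp only [hF]
    rw [dif_neg hij, if_pos hadj]
  have hF3 : ∀ (j : Fin n) (u : V j) (i : Fin n) (hi : i ∈ S) (cc : Fin (d i)),
      i ≠ j → ¬ G.Adj j i → F ⟨j, u⟩ ⟨⟨i, hi⟩, cc⟩ = ((5 : ℝ), (5:ℝ)) := by
    intro j u i hi cc hij hadj
    simp only [hF]
    rw [dif_neg hij, if_neg hadj]
  have hkey : ∀ p q : ℝ × ℝ,
      (max (Real.arctan p.1) (Real.arctan q.1) ≤ min (Real.arctan p.2) (Real.arctan q.2)) ↔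
        max p.1 q.1 ≤ min p.2 q.2 := by
    intro p q
    rw [← Real.arctan_strictMono.monotone.map_max, ← Real.arctan_strictMono.monotone.map_min,
      Real.arctan_strictMono.le_iff_le]
  have hℓS : (⟨ℓ, hℓ⟩ : Fin n) ∈ S := by simp [hS]
  have hpos : 0 < ∑ i ∈ S, d i := Finset.sum_pos (fun i _ => (hspec i).1) ⟨⟨ℓ, hℓ⟩, hℓS⟩
  have hcard : Fintype.card ((i : {i : Fin n // i ∈ S}) × Fin (d i.1)) = ∑ i ∈ S, d i := by
    rw [Fintype.card_sigma]
    simp only [Fintype.card_fin]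
    exact Finset.sum_coe_sort S d
  have hrep : BoxRep (genJoin G H) (∑ i ∈ S, d i) := by
    refine BoxRepOn.toBoxRep (Fintype.equivFinOfCardEq hcard) ?_
    refine ⟨F, ?_, ?_⟩
    · rintro ⟨j, v⟩ ⟨⟨i, hi⟩, cc⟩
      simp only [hF]
      split_ifs with h1 h2
      · exact Real.arctan_strictMono.monotone (hf1 _ _ _)
      · norm_num
      · norm_num
    · rintro ⟨j, v⟩ ⟨k, w⟩ hxy
      by_cases hjk : j = k
      · subst hjk
        have hvw : v ≠ w := fun h => hxy (by rw [h])
        rw [genJoin_adj_eq]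
        by_cases hjℓ : ℓ ≤ (j : ℕ)
        · have hjS : j ∈ S := by simp [hS, hjℓ]
          rw [hf2 j v w hvw]
          constructor
          · rintro h ⟨⟨i, hi⟩, cc⟩
            by_cases hij : i = j
            · subst hij
              rw [hF1 i hi v cc, hF1 i hi w cc]
              exact (hkey _ _).mpr (h cc)
            · by_cases hadj : G.Adj j i
              · rw [hF2 j v i hi cc hij hadj, hF2 j w i hi cc hij hadj]; norm_num
              · rw [hF3 j v i hi cc hij hadj, hF3 j w i hi cc hij hadj]; norm_num
          · intro h cc
            have hc := h ⟨⟨j, hjS⟩, cc⟩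
            rw [hF1 j hjS v cc, hF1 j hjS w cc] at hc
            exact (hkey _ _).mp hc
        · have hHj : H j = ⊤ := hcomplete j (by omega)
          have hadjvw : (H j).Adj v w := by rw [hHj]; exact hvw
          refine ⟨fun _ => ?_, fun _ => hadjvw⟩
          rintro ⟨⟨i, hi⟩, cc⟩
          have hij : i ≠ j := by
            intro h; subst h
            exact hjℓ (by simpa [hS] using hi)
          by_cases hadj : G.Adj j i
          · rw [hF2 j v i hi cc hij hadj, hF2 j w i hi cc hij hadj]; norm_num
          · rw [hF3 j v i hi cc hij hadj, hF3 j w i hi cc hij hadj]; norm_num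
      · rw [genJoin_adj_ne G H v w hjk]
        constructor
        · rintro hadj ⟨⟨i, hi⟩, cc⟩
          by_cases hij : i = j
          · subst hij
            rw [hF1 i hi v cc, hF2 k w i hi cc (by omega) hadj.symm]
            have h1 := neg_two_lt_arctan' (f i v cc).1
            have h2 := arctan_lt_two' (f i v cc).2
            have h3 := Real.arctan_strictMono.monotone (hf1 i v cc)
            simp only [max_le_iff, le_min_iff]
            refine ⟨⟨?_, ?_⟩, ?_, ?_⟩ <;> linarith
          · by_cases hik : i = k
            · subst hik
              rw [hF1 i hi w cc, hF2 j v i hi cc hij hadj]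
              have h1 := neg_two_lt_arctan' (f i w cc).1
              have h2 := arctan_lt_two' (f i w cc).2
              have h3 := Real.arctan_strictMono.monotone (hf1 i w cc)
              simp only [max_le_iff, le_min_iff]
              refine ⟨⟨?_, ?_⟩, ?_, ?_⟩ <;> linarith
            · by_cases h1 : G.Adj j i <;> by_cases h2 : G.Adj k i
              · rw [hF2 j v i hi cc hij h1, hF2 k w i hi cc hik h2]; norm_num
              · rw [hF2 j v i hi cc hij h1, hF3 k w i hi cc hik h2]; norm_num
              · rw [hF3 j v i hi cc hij h1, hF2 k w i hi cc hik h2]; norm_num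
              · rw [hF3 j v i hi cc hij h1, hF3 k w i hi cc hik h2]; norm_num
        · intro h
          by_contra hadj
          have hcase : ℓ ≤ (j : ℕ) ∨ ℓ ≤ (k : ℕ) := by
            by_contra hc
            push_neg at hc
            exact hadj (hclique (show (j : ℕ) < ℓ from hc.1) (show (k : ℕ) < ℓ from hc.2) hjk)
          rcases hcase with hc | hc
          · have hjS : j ∈ S := by simp [hS, hc]
            set cc : Fin (d j) := ⟨0, (hspec j).1⟩ with hcc
            have hcont := h ⟨⟨j, hjS⟩, cc⟩
            rw [hF1 j hjS v cc, hF3 k w j hjS cc hjk (fun ha => hadj ha.symm)] at hcont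
            have h2 := arctan_lt_two' (f j v cc).2
            have h5 : (5:ℝ) ≤ min (Real.arctan (f j v cc).2) 5 :=
              le_trans (le_max_right _ _) hcont
            have h6 := min_le_left (Real.arctan (f j v cc).2) (5:ℝ)
            linarith
          · have hkS : k ∈ S := by simp [hS, hc]
            set cc : Fin (d k) := ⟨0, (hspec k).1⟩ with hcc
            have hcont := h ⟨⟨k, hkS⟩, cc⟩
            rw [hF1 k hkS w cc, hF3 j v k hkS cc (Ne.symm hjk) hadj] at hcont
            have h2 := arctan_lt_two' (f k w cc).2
            have h5 : (5:ℝ) ≤ min 5 (Real.arctan (f k w cc).2) :=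
              le_trans (le_max_left _ _) hcont
            have h6 := min_le_right (5:ℝ) (Real.arctan (f k w cc).2)
            linarith
  exact Nat.sInf_le ⟨hpos, hrep⟩
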